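/- arXiv:2103.11523 — 2 statements merged into one kernel-verified Lean document; each statement's English description precedes it below -/
import Mathlib

section
/- Let n ≥ 2, let V₁ and V₂ be complementary complex linear subspaces of ℂⁿ, and write each z ∈ ℂⁿ uniquely as z = z' + z'' with z' ∈ V₁, z'' ∈ V₂. Let V ⊆ ℂⁿ be an unbounded subset having a unique tangent cone at infinity C_∞(V). Suppose there are real numbers A > 0 and B ≥ 1 such that every v ∈ C_∞(V) satisfies the strict inequality ‖v''‖ < A(1 + ‖v'‖)^B. Then there exists a positive real number R such that every w ∈ V satisfies ‖w''‖ < R(1 + ‖w'‖)^B. -/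
/-- The tangent cone at infinity of `V ⊆ ℂⁿ` with respect to a sequence `t` of
(positive) real numbers tending to `∞`: the set of `v` for which there is a sequence
`x j ∈ V` with `x j / t j → v`. -/
def tangentConeAtInftyWrt (n : ℕ) (V : Set (EuclideanSpace ℂ (Fin n))) (t : ℕ → ℝ) :
    Set (EuclideanSpace ℂ (Fin n)) :=
  {v | ∃ x : ℕ → EuclideanSpace ℂ (Fin n), (∀ j, x j ∈ V) ∧
    Filter.Tendsto (fun j => (t j)⁻¹ • x j) Filter.atTop (nhds v)}

/-- Let `V₁, V₂` be complementary complex linear subspaces of `ℂⁿ`,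
with projection `π : z ↦ z'` onto `V₁` along `V₂` (so `z'' = z - π z`).  Let `V` be an
unbounded subset of `ℂⁿ` with a unique tangent cone at infinity `C`.  If `A > 0`,
`B ≥ 1` and every `v ∈ C` satisfies `‖v''‖ < A(1 + ‖v'‖)^B`, then there exists `R > 0`
such that every `w ∈ V` satisfies `‖w''‖ < R(1 + ‖w'‖)^B`. -/
theorem statement1 (n : ℕ) (hn : 2 ≤ n)
    (V₁ V₂ : Submodule ℂ (EuclideanSpace ℂ (Fin n))) (hcompl : IsCompl V₁ V₂)
    (π : EuclideanSpace ℂ (Fin n) → EuclideanSpace ℂ (Fin n))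
    (hπ : ∀ z, π z ∈ V₁ ∧ z - π z ∈ V₂)
    (V : Set (EuclideanSpace ℂ (Fin n))) (hV : ¬ Bornology.IsBounded V)
    (C : Set (EuclideanSpace ℂ (Fin n)))
    (hC : ∀ t : ℕ → ℝ, (∀ j, 0 < t j) → Filter.Tendsto t Filter.atTop Filter.atTop →
        tangentConeAtInftyWrt n V t = C)
    (A B : ℝ) (hA : 0 < A) (hB : 1 ≤ B)
    (hcone : ∀ v ∈ C, ‖v - π v‖ < A * (1 + ‖π v‖) ^ B) :
    ∃ R : ℝ, 0 < R ∧ ∀ w ∈ V, ‖w - π w‖ < R * (1 + ‖π w‖) ^ B := by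
  classical
  by_contra hcon
  push_neg at hcon
  -- the continuous linear projection onto V₁ along V₂
  set Pl : EuclideanSpace ℂ (Fin n) →ₗ[ℂ] EuclideanSpace ℂ (Fin n) :=
    V₁.subtype ∘ₗ (V₁.projectionOnto V₂ hcompl) with hPl
  set P : EuclideanSpace ℂ (Fin n) →L[ℂ] EuclideanSpace ℂ (Fin n) :=
    LinearMap.toContinuousLinearMap Pl with hPdef
  have hP : ∀ z, π z = P z := by
    intro z
    obtain ⟨h1, h2⟩ := hπ z
    have hz : z = π z + (z - π z) := by abel
    have e1 : Pl (π z) = π z := by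
      simpa [hPl] using
        congrArg (V₁.subtype) (Submodule.projectionOnto_apply_left hcompl ⟨π z, h1⟩)
    have e2 : Pl (z - π z) = 0 := by
      simpa [hPl] using
        congrArg (V₁.subtype) (Submodule.projectionOnto_apply_right hcompl ⟨z - π z, h2⟩)
    have : Pl z = π z := by
      conv_lhs => rw [hz]
      rw [map_add, e1, e2, add_zero]
    rw [← this]
    rfl
  -- basic norm bounds
  have hπnorm : ∀ z, ‖π z‖ ≤ ‖P‖ * ‖z‖ := by
    intro z; rw [hP]; exact P.le_opNorm z
  have hπ2 : ∀ z : EuclideanSpace ℂ (Fin n), ‖z - π z‖ ≤ (1 + ‖P‖) * ‖z‖ := by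
    intro z
    calc ‖z - π z‖ ≤ ‖z‖ + ‖π z‖ := norm_sub_le _ _
      _ ≤ ‖z‖ + ‖P‖ * ‖z‖ := by linarith [hπnorm z]
      _ = (1 + ‖P‖) * ‖z‖ := by ring
  have hPpos : 0 < 1 + ‖P‖ := by positivity
  have hbase1 : ∀ x : ℝ, 0 ≤ x → 1 ≤ (1 + x) ^ B := by
    intro x hx
    calc (1:ℝ) = (1 + x) ^ (0:ℝ) := by rw [Real.rpow_zero]
      _ ≤ (1 + x) ^ B := Real.rpow_le_rpow_of_exponent_le (by linarith) (by linarith)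
  have hbase2 : ∀ x : ℝ, 0 ≤ x → x ≤ (1 + x) ^ B := by
    intro x hx
    calc x ≤ 1 + x := by linarith
      _ = (1 + x) ^ (1:ℝ) := by rw [Real.rpow_one]
      _ ≤ (1 + x) ^ B := Real.rpow_le_rpow_of_exponent_le (by linarith) hB
  -- choose witnesses of failure
  have hw : ∀ j : ℕ, ∃ w ∈ V, ((j:ℝ) + 1) * (1 + ‖π w‖) ^ B ≤ ‖w - π w‖ := by
    intro j
    exact hcon ((j:ℝ) + 1) (by positivity)
  choose w hwV hwIneq using hw
  have hwlarge : ∀ j : ℕ, (j:ℝ) + 1 ≤ ‖w j - π (w j)‖ := by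
    intro j
    calc (j:ℝ) + 1 = ((j:ℝ) + 1) * 1 := by ring
      _ ≤ ((j:ℝ) + 1) * (1 + ‖π (w j)‖) ^ B := by
          apply mul_le_mul_of_nonneg_left (hbase1 _ (norm_nonneg _)) (by positivity)
      _ ≤ ‖w j - π (w j)‖ := hwIneq j
  have hwnorm : ∀ j : ℕ, ((j:ℝ) + 1) / (1 + ‖P‖) ≤ ‖w j‖ := by
    intro j
    rw [div_le_iff₀ hPpos]
    calc (j:ℝ) + 1 ≤ ‖w j - π (w j)‖ := hwlarge j
      _ ≤ (1 + ‖P‖) * ‖w j‖ := hπ2 _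
      _ = ‖w j‖ * (1 + ‖P‖) := by ring
  -- scaling sequence
  set t : ℕ → ℝ := fun j => max 1 ‖w j‖ with ht
  have ht0 : ∀ j, 0 < t j := fun j => lt_of_lt_of_le one_pos (le_max_left _ _)
  have htinf : Filter.Tendsto t Filter.atTop Filter.atTop := by
    apply Filter.tendsto_atTop_mono
      (fun j => le_trans (hwnorm j) (le_max_right 1 ‖w j‖))
    apply Filter.Tendsto.atTop_div_const hPpos
    apply Filter.tendsto_atTop_add_const_right
    exact tendsto_natCast_atTop_atTop
  set u : ℕ → EuclideanSpace ℂ (Fin n) := fun j => (t j)⁻¹ • w j with hu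
  have hut : ∀ j, ‖u j‖ = ‖w j‖ / t j := by
    intro j
    rw [hu]
    simp only [norm_smul, Real.norm_eq_abs, abs_inv, abs_of_pos (ht0 j)]
    rw [div_eq_inv_mul]
  have humem : ∀ j, u j ∈ Metric.closedBall (0 : EuclideanSpace ℂ (Fin n)) 1 := by
    intro j
    rw [Metric.mem_closedBall, dist_zero_right, hut]
    rw [div_le_one (ht0 j)]
    exact le_max_right _ _
  obtain ⟨v, hvball, φ, hφ, hconv⟩ :=
    (isCompact_closedBall (0 : EuclideanSpace ℂ (Fin n)) 1).tendsto_subseq humem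
  have htφtop : Filter.Tendsto (t ∘ φ) Filter.atTop Filter.atTop :=
    htinf.comp hφ.tendsto_atTop
  -- the norm of v is 1
  have hv1 : ‖v‖ = 1 := by
    have h1 : Filter.Tendsto (fun j => ‖(u ∘ φ) j‖) Filter.atTop (nhds ‖v‖) := hconv.norm
    have h2 : (fun j => ‖(u ∘ φ) j‖) =ᶠ[Filter.atTop] (fun _ => (1:ℝ)) := by
      rw [Filter.eventuallyEq_iff_exists_mem]
      refine ⟨{j | ⌈‖P‖⌉₊ ≤ j}, Filter.mem_atTop _, ?_⟩
      intro j hj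
      simp only [Set.mem_setOf_eq] at hj
      have hj' : ‖P‖ ≤ (j:ℝ) := Nat.ceil_le.mp hj
      have hφj : (j:ℝ) ≤ (φ j : ℝ) := Nat.cast_le.mpr (hφ.le_apply)
      have h1w : 1 ≤ ‖w (φ j)‖ := by
        refine le_trans ?_ (hwnorm (φ j))
        rw [le_div_iff₀ hPpos]
        linarith
      have : t (φ j) = ‖w (φ j)‖ := max_eq_right h1w
      simp only [Function.comp_apply, hut, this]
      rw [div_self (by linarith)]
    exact tendsto_nhds_unique (h1.congr' h2) tendsto_const_nhds
  -- π v = 0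
  have hπu : ∀ j, π (u j) = (t j)⁻¹ • π (w j) := by
    intro j
    rw [hP, hP, hu]
    exact P.map_smul_of_tower _ _
  have hπubound : ∀ j, ‖π (u j)‖ ≤ (1 + ‖P‖) / ((j:ℝ) + 1) := by
    intro j
    have key : ((j:ℝ) + 1) * ‖π (w j)‖ ≤ (1 + ‖P‖) * t j := by
      calc ((j:ℝ) + 1) * ‖π (w j)‖
          ≤ ((j:ℝ) + 1) * (1 + ‖π (w j)‖) ^ B := by
            apply mul_le_mul_of_nonneg_left (hbase2 _ (norm_nonneg _)) (by positivity)
        _ ≤ ‖w j - π (w j)‖ := hwIneq j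
        _ ≤ (1 + ‖P‖) * ‖w j‖ := hπ2 _
        _ ≤ (1 + ‖P‖) * t j :=
            mul_le_mul_of_nonneg_left (le_max_right _ _) (le_of_lt hPpos)
    have hnu : ‖π (u j)‖ = ‖π (w j)‖ / t j := by
      rw [hπu j, norm_smul, Real.norm_eq_abs, abs_inv, abs_of_pos (ht0 j), div_eq_inv_mul]
    rw [hnu, div_le_div_iff₀ (ht0 j) (by positivity)]
    calc ‖π (w j)‖ * ((j:ℝ) + 1) = ((j:ℝ) + 1) * ‖π (w j)‖ := by ring
      _ ≤ (1 + ‖P‖) * t j := key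
  have hπv0 : π v = 0 := by
    have hcont : Filter.Tendsto (fun j => π ((u ∘ φ) j)) Filter.atTop (nhds (π v)) := by
      have : Filter.Tendsto (fun j => P ((u ∘ φ) j)) Filter.atTop (nhds (P v)) :=
        (P.continuous.tendsto v).comp hconv
      simpa only [hP] using this
    have hsq : Filter.Tendsto (fun j => ‖π ((u ∘ φ) j)‖) Filter.atTop (nhds 0) := by
      apply squeeze_zero (g := fun j : ℕ => (1 + ‖P‖) / ((j:ℝ) + 1))
        (fun j => norm_nonneg _)
      · intro j
        refine le_trans (hπubound (φ j)) ?_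
        apply div_le_div_of_nonneg_left (le_of_lt hPpos) (by positivity)
        have : (j:ℝ) ≤ (φ j : ℝ) := Nat.cast_le.mpr (hφ.le_apply)
        linarith
      · apply Filter.Tendsto.div_atTop tendsto_const_nhds
        apply Filter.tendsto_atTop_add_const_right
        exact tendsto_natCast_atTop_atTop
    have := tendsto_nhds_unique hcont.norm hsq
    exact norm_eq_zero.mp this
  -- (A+1) • v lies in C
  have hA1 : (0:ℝ) < A + 1 := by linarith
  have hvC2 : (A + 1) • v ∈ C := by
    rw [← hC (fun j => t (φ j) / (A + 1)) (fun j => div_pos (ht0 _) hA1)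
      (htφtop.atTop_div_const hA1)]
    refine ⟨w ∘ φ, fun j => hwV _, ?_⟩
    have heq : ∀ j, (t (φ j) / (A + 1))⁻¹ • (w ∘ φ) j = (A + 1) • (u ∘ φ) j := by
      intro j
      simp only [Function.comp_apply, hu, smul_smul]
      congr 1
      field_simp
    simp only [heq]
    exact hconv.const_smul (A + 1)
  -- contradiction
  have hπscaled : π ((A + 1) • v) = 0 := by
    rw [hP]
    rw [P.map_smul_of_tower]
    rw [← hP, hπv0, smul_zero]
  have hfinal := hcone _ hvC2
  rw [hπscaled] at hfinal
  simp only [norm_zero, add_zero, Real.one_rpow, mul_one, sub_zero] at hfinal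
  rw [norm_smul, Real.norm_eq_abs, abs_of_pos hA1, hv1, mul_one] at hfinal
  linarith
end

section
/- Let n ≥ 2 and let V ⊆ ℂⁿ be an unbounded subset having a unique tangent cone at infinity C_∞(V). Suppose C_∞(V) lies in an algebraic region of type (k, n), i.e., there exist complementary complex linear subspaces V₁, V₂ of ℂⁿ with dim V₁ = k, dim V₂ = n − k, and positive reals Ã, B such that every v ∈ C_∞(V) satisfies ‖v''‖ ≤ Ã(1 + ‖v'‖)^B (where z = z' + z'' is the decomposition with z' ∈ V₁, z'' ∈ V₂). Then there exists an algebraic region Ω of type (k, n) containing both V and C_∞(V); more precisely, with the same subspaces V₁, V₂ there exist positive reals A and B' ≥ 1 such that every z ∈ V ∪ C_∞(V) satisfies ‖z''‖ ≤ A(1 + ‖z'‖)^{B'}. -/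
/-- Let `V ⊆ ℂⁿ` be an unbounded subset with a unique tangent cone
at infinity `C`.  Suppose `C` lies in an algebraic region of type `(k, n)` given by
complementary subspaces `V₁, V₂` with `dim V₁ = k`, `dim V₂ = n - k`, and constants
`Atilde, B > 0`: every `v ∈ C` satisfies `‖v''‖ ≤ Atilde(1 + ‖v'‖)^B`, where `π : z ↦ z'` is the
projection onto `V₁` along `V₂` and `z'' = z - π z`.  Then with the same `V₁, V₂`,
there exist `A > 0` and `B' ≥ 1` such that every `z ∈ V ∪ C` satisfies
`‖z''‖ ≤ A(1 + ‖z'‖)^{B'}`. -/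
theorem statement2 (n k : ℕ) (hn : 2 ≤ n)
    (V₁ V₂ : Submodule ℂ (EuclideanSpace ℂ (Fin n))) (hcompl : IsCompl V₁ V₂)
    (hk₁ : Module.finrank ℂ V₁ = k) (hk₂ : Module.finrank ℂ V₂ = n - k)
    (π : EuclideanSpace ℂ (Fin n) → EuclideanSpace ℂ (Fin n))
    (hπ : ∀ z, π z ∈ V₁ ∧ z - π z ∈ V₂)
    (V : Set (EuclideanSpace ℂ (Fin n))) (hV : ¬ Bornology.IsBounded V)
    (C : Set (EuclideanSpace ℂ (Fin n)))
    (hC : ∀ t : ℕ → ℝ, (∀ j, 0 < t j) → Filter.Tendsto t Filter.atTop Filter.atTop →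
        tangentConeAtInftyWrt n V t = C)
    (Atilde B : ℝ) (hAtilde : 0 < Atilde) (hB : 0 < B)
    (hcone : ∀ v ∈ C, ‖v - π v‖ ≤ Atilde * (1 + ‖π v‖) ^ B) :
    ∃ A : ℝ, 0 < A ∧ ∃ B' : ℝ, 1 ≤ B' ∧
      ∀ z ∈ V ∪ C, ‖z - π z‖ ≤ A * (1 + ‖π z‖) ^ B' := by
  classical
  set B' : ℝ := max B 1 with hB'def
  have hB'1 : (1:ℝ) ≤ B' := le_max_right _ _
  have hBB' : B ≤ B' := le_max_left _ _
  -- the projection is linear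
  set L : EuclideanSpace ℂ (Fin n) →ₗ[ℂ] EuclideanSpace ℂ (Fin n) :=
    V₁.subtype ∘ₗ (V₁.projectionOnto V₂ hcompl) with hL
  have hπeq : ∀ z, π z = L z := by
    intro z
    have h1 := (hπ z).1
    have h2 := (hπ z).2
    have hz : z = ((⟨π z, h1⟩ : V₁) : EuclideanSpace ℂ (Fin n)) +
        ((⟨z - π z, h2⟩ : V₂) : EuclideanSpace ℂ (Fin n)) := by simp
    have : V₁.projectionOnto V₂ hcompl z = ⟨π z, h1⟩ := by
      conv_lhs => rw [hz]
      rw [map_add, Submodule.projectionOnto_apply_left,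
        Submodule.projectionOnto_apply_right, add_zero]
    simp [hL, this]
  set F : EuclideanSpace ℂ (Fin n) →L[ℂ] EuclideanSpace ℂ (Fin n) :=
    LinearMap.toContinuousLinearMap L with hFdef
  have hF : ∀ z, π z = F z := by
    intro z; rw [hπeq z]; rfl
  set G : EuclideanSpace ℂ (Fin n) →L[ℂ] EuclideanSpace ℂ (Fin n) :=
    ContinuousLinearMap.id ℂ _ - F with hGdef
  have hG : ∀ z, z - π z = G z := by
    intro z; rw [hF z]; simp [hGdef]
  have hbase : ∀ z : EuclideanSpace ℂ (Fin n), (1:ℝ) ≤ 1 + ‖π z‖ :=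
    fun z => le_add_of_nonneg_right (norm_nonneg _)
  have hpow1 : ∀ z : EuclideanSpace ℂ (Fin n), (1:ℝ) ≤ (1 + ‖π z‖) ^ B' := by
    intro z
    calc (1:ℝ) = (1:ℝ) ^ B' := (Real.one_rpow _).symm
    _ ≤ (1 + ‖π z‖) ^ B' :=
      Real.rpow_le_rpow zero_le_one (hbase z) (by linarith)
  -- key claim: V lies in an algebraic region with exponent B'
  have key : ∃ A : ℝ, 0 < A ∧ ∀ z ∈ V, ‖z - π z‖ ≤ A * (1 + ‖π z‖) ^ B' := by
    by_contra hcon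
    push_neg at hcon
    have hx : ∀ j : ℕ, ∃ z ∈ V, ((j:ℝ)+1) * (1 + ‖π z‖) ^ B' < ‖z - π z‖ := by
      intro j
      exact hcon ((j:ℝ)+1) (by positivity)
    choose x hxV hxlt using hx
    set t : ℕ → ℝ := fun j => ‖x j‖ with ht
    have hxlarge : ∀ j : ℕ, ((j:ℝ)+1) < ‖x j - π (x j)‖ := by
      intro j
      calc ((j:ℝ)+1) = ((j:ℝ)+1) * 1 := (mul_one _).symm
      _ ≤ ((j:ℝ)+1) * (1 + ‖π (x j)‖) ^ B' :=
          mul_le_mul_of_nonneg_left (hpow1 _) (by positivity)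
      _ < ‖x j - π (x j)‖ := hxlt j
    have hGle : ∀ j : ℕ, ‖x j - π (x j)‖ ≤ ‖G‖ * t j := by
      intro j; rw [hG]; exact G.le_opNorm _
    have hGpos : 0 < ‖G‖ := by
      have h0 := lt_of_lt_of_le (hxlarge 0) (hGle 0)
      push_cast at h0
      nlinarith [norm_nonneg G, norm_nonneg (x 0)]
    have htlb : ∀ j : ℕ, ((j:ℝ)+1) / ‖G‖ < t j := by
      intro j
      rw [div_lt_iff₀ hGpos]
      calc ((j:ℝ)+1) < ‖x j - π (x j)‖ := hxlarge j
      _ ≤ ‖G‖ * t j := hGle j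
      _ = t j * ‖G‖ := mul_comm _ _
    have htpos : ∀ j : ℕ, 0 < t j := by
      intro j
      refine lt_of_le_of_lt ?_ (htlb j)
      positivity
    have httop : Filter.Tendsto t Filter.atTop Filter.atTop := by
      apply Filter.tendsto_atTop_mono (fun j => (htlb j).le)
      apply Filter.Tendsto.atTop_div_const hGpos
      exact Filter.tendsto_atTop_add_const_right _ 1 tendsto_natCast_atTop_atTop
    set e : ℕ → EuclideanSpace ℂ (Fin n) := fun j => (t j)⁻¹ • x j with he
    have hesphere : ∀ j, e j ∈ Metric.sphere (0 : EuclideanSpace ℂ (Fin n)) 1 := by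
      intro j
      rw [mem_sphere_zero_iff_norm]
      rw [he]
      rw [norm_smul, Real.norm_eq_abs, abs_inv, abs_of_pos (htpos j)]
      exact inv_mul_cancel₀ (htpos j).ne'
    obtain ⟨v, hv, φ, hφ, hconv⟩ :=
      (isCompact_sphere (0 : EuclideanSpace ℂ (Fin n)) 1).tendsto_subseq hesphere
    have hvnorm : ‖v‖ = 1 := mem_sphere_zero_iff_norm.mp hv
    have ht'pos : ∀ j, 0 < t (φ j) := fun j => htpos _
    have ht'top : Filter.Tendsto (fun j => t (φ j)) Filter.atTop Filter.atTop :=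
      httop.comp hφ.tendsto_atTop
    have hvC : v ∈ C := by
      rw [← hC (fun j => t (φ j)) ht'pos ht'top]
      exact ⟨fun j => x (φ j), fun j => hxV _, hconv⟩
    -- π v = 0
    have hπv : π v = 0 := by
      have h1 : Filter.Tendsto (fun j => F ((e ∘ φ) j)) Filter.atTop (nhds (F v)) :=
        (F.continuous.tendsto v).comp hconv
      have h2 : Filter.Tendsto (fun j => F ((e ∘ φ) j)) Filter.atTop (nhds 0) := by
        have hbound : ∀ j : ℕ, ‖F ((e ∘ φ) j)‖ ≤ ‖G‖ / ((j:ℝ)+1) := by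
          intro j
          have hje : ((j:ℝ)+1) ≤ ((φ j : ℝ)+1) :=
            add_le_add_left (by exact_mod_cast hφ.id_le j) 1
          have hkey : ‖π (x (φ j))‖ / t (φ j) ≤ ‖G‖ / ((φ j : ℝ)+1) := by
            rw [div_le_div_iff₀ (htpos _) (by positivity)]
            have h3 : ((φ j:ℝ)+1) * (1 + ‖π (x (φ j))‖) ≤
                ((φ j:ℝ)+1) * (1 + ‖π (x (φ j))‖) ^ B' := by
              apply mul_le_mul_of_nonneg_left _ (by positivity)
              calc (1 + ‖π (x (φ j))‖) = (1 + ‖π (x (φ j))‖) ^ (1:ℝ) :=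
                (Real.rpow_one _).symm
              _ ≤ (1 + ‖π (x (φ j))‖) ^ B' :=
                Real.rpow_le_rpow_of_exponent_le (hbase _) hB'1
            have h4 := (hxlt (φ j)).le
            have h5 := hGle (φ j)
            nlinarith [norm_nonneg (π (x (φ j))), (htpos (φ j)).le]
          have hFe : ‖F ((e ∘ φ) j)‖ = ‖π (x (φ j))‖ / t (φ j) := by
            show ‖F ((t (φ j))⁻¹ • x (φ j))‖ = _
            rw [F.map_smul_of_tower, norm_smul, Real.norm_eq_abs, abs_inv,
              abs_of_pos (htpos (φ j)), ← hF, div_eq_inv_mul]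
          rw [hFe]
          exact le_trans hkey
            (div_le_div_of_nonneg_left (norm_nonneg G) (by positivity) hje)
        apply squeeze_zero_norm hbound
        apply Filter.Tendsto.div_atTop tendsto_const_nhds
        exact Filter.tendsto_atTop_add_const_right _ 1 tendsto_natCast_atTop_atTop
      rw [hF v]
      exact tendsto_nhds_unique h1 h2
    -- scaling: (Atilde + 1) • v ∈ C
    set lam : ℝ := Atilde + 1 with hlam
    have hlampos : 0 < lam := by positivity
    have hw : lam • v ∈ C := by
      have hvmem : v ∈ tangentConeAtInftyWrt n V (fun j => t (φ j)) := by
        rw [hC (fun j => t (φ j)) ht'pos ht'top]; exact hvC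
      obtain ⟨y, hyV, hy⟩ := hvmem
      have hs : ∀ j : ℕ, 0 < t (φ j) / lam := fun j => div_pos (htpos _) hlampos
      have hstop : Filter.Tendsto (fun j => t (φ j) / lam) Filter.atTop Filter.atTop :=
        ht'top.atTop_div_const hlampos
      have hmem : lam • v ∈ tangentConeAtInftyWrt n V (fun j => t (φ j) / lam) := by
        refine ⟨y, hyV, ?_⟩
        have h := hy.const_smul lam
        refine h.congr (fun j => ?_)
        have hinv : ((t (φ j)) / lam)⁻¹ = lam * (t (φ j))⁻¹ := by
          field_simp
        rw [hinv, mul_smul]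
      rw [hC _ hs hstop] at hmem
      exact hmem
    -- contradiction
    have hπw : π (lam • v) = 0 := by
      rw [hπeq, LinearMap.map_smul_of_tower, ← hπeq, hπv, smul_zero]
    have hfin := hcone _ hw
    rw [hπw] at hfin
    simp only [sub_zero, norm_zero, add_zero, Real.one_rpow, mul_one] at hfin
    rw [norm_smul, hvnorm, mul_one, Real.norm_eq_abs, abs_of_pos hlampos] at hfin
    linarith
  obtain ⟨A₀, hA₀, hA₀V⟩ := key
  refine ⟨max A₀ Atilde, lt_of_lt_of_le hA₀ (le_max_left _ _), B', hB'1, ?_⟩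
  rintro z (hz | hz)
  · calc ‖z - π z‖ ≤ A₀ * (1 + ‖π z‖) ^ B' := hA₀V z hz
    _ ≤ max A₀ Atilde * (1 + ‖π z‖) ^ B' :=
      mul_le_mul_of_nonneg_right (le_max_left _ _) (by positivity)
  · calc ‖z - π z‖ ≤ Atilde * (1 + ‖π z‖) ^ B := hcone z hz
    _ ≤ Atilde * (1 + ‖π z‖) ^ B' :=
      mul_le_mul_of_nonneg_left
        (Real.rpow_le_rpow_of_exponent_le (hbase z) hBB') hAtilde.le
    _ ≤ max A₀ Atilde * (1 + ‖π z‖) ^ B' :=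
      mul_le_mul_of_nonneg_right (le_max_right _ _) (by positivity)
end
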